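/- Let (M, Tr) be a semifinite von Neumann algebra (or a σ-finite measure space). If (ρ_n) is a sequence in L¹(M)⁺ converging in L¹ norm to ρ, then Tr(supp ρ) ≤ liminf_n Tr(supp ρ_n), i.e., the trace of the support projection is lower semicontinuous with respect to L¹ convergence. In the commutative case: if f_n → f in L¹(X,μ) with f_n, f ≥ 0, then μ(supp f) ≤ liminf μ(supp f_n). -/

import Mathlib

open MeasureTheory Filter

/-- Lower semicontinuity of the measure of the support under `L¹` convergence
(commutative case): if `f_n → f` in `L¹(X,μ)` with all functions nonnegative, then
`μ(supp f) ≤ liminf_n μ(supp f_n)`. -/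
theorem stmt18 {X : Type*} [MeasurableSpace X] (μ : Measure X) [SigmaFinite μ]
    (f : X → ℝ) (fs : ℕ → X → ℝ)
    (hf : Integrable f μ) (hfs : ∀ n, Integrable (fs n) μ)
    (hfpos : ∀ x, 0 ≤ f x) (hfspos : ∀ n x, 0 ≤ fs n x)
    (hconv : Tendsto (fun n => ∫ x, |fs n x - f x| ∂μ) atTop (nhds 0)) :
    μ (Function.support f) ≤ atTop.liminf fun n => μ (Function.support (fs n)) := by
  by_contra h
  push_neg at h
  obtain ⟨c, hc1, hc2⟩ := exists_between h
  -- frequently the measure of the support is below `c`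
  have hfreq : ∃ᶠ n in atTop, μ (Function.support (fs n)) < c :=
    frequently_lt_of_liminf_lt (by isBoundedDefault) hc1
  obtain ⟨φ, hφmono, hφ⟩ := extraction_of_frequently_atTop hfreq
  -- convergence in `L¹` seminorm
  have hL1 : Tendsto (fun n => eLpNorm (fs n - f) 1 μ) atTop (nhds 0) := by
    have heq : ∀ n, eLpNorm (fs n - f) 1 μ = ENNReal.ofReal (∫ x, |fs n x - f x| ∂μ) := by
      intro n
      rw [eLpNorm_one_eq_lintegral_enorm,
        ← ofReal_integral_norm_eq_lintegral_enorm ((hfs n).sub hf)]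
      simp [Real.norm_eq_abs]
    simp only [heq]
    have := (ENNReal.continuous_ofReal.tendsto 0).comp hconv
    simpa [Function.comp_def] using this
  have hmeas : TendstoInMeasure μ fs atTop f :=
    tendstoInMeasure_of_tendsto_eLpNorm one_ne_zero (fun n => (hfs n).aestronglyMeasurable)
      hf.aestronglyMeasurable hL1
  have hmeasφ : TendstoInMeasure μ (fun k => fs (φ k)) atTop f := fun ε hε =>
    (hmeas ε hε).comp hφmono.tendsto_atTop
  obtain ⟨ψ, hψmono, hae⟩ := hmeasφ.exists_seq_tendsto_ae
  -- the monotone family of sets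
  set A : ℕ → Set X := fun k => ⋂ j, ⋂ (_ : k ≤ j), Function.support (fs (φ (ψ j))) with hA
  have hAmono : Monotone A := by
    intro k l hkl
    exact Set.iInter₂_mono' fun j hj => ⟨j, le_trans hkl hj, le_rfl⟩
  -- a.e., the support of f is contained in the union of the A k
  have hsub : Function.support f ≤ᵐ[μ] ⋃ k, A k := by
    filter_upwards [hae] with x hx hxf
    have hne : f x ≠ 0 := hxf
    have : ∀ᶠ j in atTop, fs (φ (ψ j)) x ≠ 0 := by
      have : ∀ᶠ j in atTop, fs (φ (ψ j)) x ∈ ({0}ᶜ : Set ℝ) :=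
        hx (isOpen_compl_singleton.mem_nhds hne)
      simpa using this
    obtain ⟨k, hk⟩ := eventually_atTop.1 this
    exact Set.mem_iUnion.2 ⟨k, Set.mem_iInter₂.2 fun j hj => hk j hj⟩
  have hU : μ (⋃ k, A k) = ⨆ k, μ (A k) :=
    Directed.measure_iUnion (hAmono.directed_le)
  have hAle : ∀ k, μ (A k) ≤ c := by
    intro k
    calc μ (A k) ≤ μ (Function.support (fs (φ (ψ k)))) :=
          measure_mono (Set.iInter₂_subset k le_rfl)
      _ ≤ c := (hφ (ψ k)).le
  have : μ (Function.support f) ≤ c := by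
    calc μ (Function.support f) ≤ μ (⋃ k, A k) := measure_mono_ae hsub
      _ = ⨆ k, μ (A k) := hU
      _ ≤ c := iSup_le hAle
  exact absurd (lt_of_le_of_lt this hc2) (lt_irrefl _)
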